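/- For the generalized Braess construction with parameter γ2 ∈ (0,1] and γ1 = γ2/8: edge latencies ℓ_{e1}(x)=ℓ_{e4}(x)=x, ℓ_{e2}=ℓ_{e3}=1+γ2/8, ℓ_{e5}=0, ℓ_{e6}=2+γ2, and effective path costs for sensitivity class i ∈ {1,2} given by J^i_p(f) = Σ_{e∈p}(ℓ_e(f_e) + γ_i f_e ℓ'_e(f_e)), the flow f^perv = (1,0,0,1) satisfies: population 1 (on path p1) weakly prefers p1 (its cost 2(1+γ1) is ≤ the costs 2+γ1+γ1, 2+γ1+γ1, and 2+γ2 of the other paths) and population 2 (on path p4) strictly prefers p4 (its cost 2+γ2 is < 2(1+γ2) and < 2+γ1+γ2). -/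

import Mathlib

/-- Generalized Braess construction with γ2 ∈ (0,1], γ1 = γ2/8.
At the flow f^perv = (1,0,0,1) (edge flows: f_{e1}=f_{e4}=1), the effective
path costs for sensitivity class i are: p1 ↦ 2(1+γᵢ), p2,p3 ↦ 2+γ1+γᵢ,
p4 ↦ 2+γ2.  Population 1 weakly prefers p1, population 2 strictly prefers p4. -/
theorem stmt2
    (γ1 γ2 : ℝ) (hγ2 : 0 < γ2 ∧ γ2 ≤ 1) (hγ1 : γ1 = γ2 / 8)
    -- effective path costs for sensitivity class with parameter γ at f^perv=(1,0,0,1)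
    (J : ℝ → Fin 4 → ℝ)
    (hJ : ∀ γ, J γ = ![ (1 + γ * 1) + (1 + γ * 1),
                        (1 + γ * 1) + (1 + γ2 / 8),
                        (1 + γ2 / 8) + (1 + γ * 1),
                        2 + γ2 ]) :
    -- population 1 weakly prefers the zig-zag path p1
    (J γ1 0 = 2 * (1 + γ1)) ∧ (∀ q, J γ1 0 ≤ J γ1 q) ∧
    -- population 2 strictly prefers the isolated path p4
    (J γ2 3 = 2 + γ2) ∧ (J γ2 3 < 2 * (1 + γ2)) ∧ (J γ2 3 < 2 + γ1 + γ2) ∧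
    (∀ q, q ≠ 3 → J γ2 3 < J γ2 q) := by
  obtain ⟨h0, h1⟩ := hγ2
  simp only [hJ]
  refine ⟨by norm_num; ring, ?_, by norm_num [show ∀ a b c d : ℝ, ![a, b, c, d] 3 = d from fun _ _ _ _ => rfl], by norm_num [show ∀ a b c d : ℝ, ![a, b, c, d] 3 = d from fun _ _ _ _ => rfl]; linarith, by norm_num [show ∀ a b c d : ℝ, ![a, b, c, d] 3 = d from fun _ _ _ _ => rfl]; linarith, ?_⟩
  · intro q; fin_cases q <;> simp <;> linarith
  · intro q hq; fin_cases q <;> simp_all <;> linarith
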